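/- The number of ways to insert r pairs of brackets into the sequence n, n-1, ..., 2, 1 such that every integer is contained in at least one pair of brackets, every pair of brackets contains at least one integer, and between any two successive integers there is at most one left bracket and at most one right bracket (with the right bracket before the left bracket), equals the Narayana number N(n,r) = (1/n) * C(n,r) * C(n,r-1). -/

import Mathlib

/-- Number of left brackets occurring at positions `≤ i` (position `j` holds the
integer `n - j`, so the sequence reads `n, n-1, ..., 1`; `p.1 j = true` means there is a
left bracket immediately before the `j`-th integer, `p.2 j = true` a right bracket
immediately after it; this encoding builds in that between two successive integers there
is at most one right bracket followed by at most one left bracket, and that every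
bracket pair encloses at least one integer). -/
def leftsUpTo {n : ℕ} (p : (Fin n → Bool) × (Fin n → Bool)) (i : Fin n) : ℕ :=
  (Finset.univ.filter fun j => j ≤ i ∧ p.1 j = true).card

def rightsUpTo {n : ℕ} (p : (Fin n → Bool) × (Fin n → Bool)) (i : Fin n) : ℕ :=
  (Finset.univ.filter fun j => j ≤ i ∧ p.2 j = true).card

def rightsBelow {n : ℕ} (p : (Fin n → Bool) × (Fin n → Bool)) (i : Fin n) : ℕ :=
  (Finset.univ.filter fun j => j < i ∧ p.2 j = true).card

/-- `p` is a non-crossing sequence of type `(n, r)`: `r` left and `r` right brackets,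
the bracket word is balanced/properly nested (every prefix has at least as many left as
right brackets), and every integer lies strictly inside at least one bracket pair. -/
def IsBrk (n r : ℕ) (p : (Fin n → Bool) × (Fin n → Bool)) : Prop :=
  (Finset.univ.filter fun j => p.1 j = true).card = r ∧
  (Finset.univ.filter fun j => p.2 j = true).card = r ∧
  (∀ i, rightsUpTo p i ≤ leftsUpTo p i) ∧
  (∀ i, rightsBelow p i < leftsUpTo p i)


variable {N : ℕ}

/-- number of elements of `X` with value `< j` -/
def cntlt (X : Finset (Fin N)) (j : ℕ) : ℕ := (X.filter (fun x => x.val < j)).card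

lemma cntlt_zero (X : Finset (Fin N)) : cntlt X 0 = 0 := by
  simp [cntlt]

lemma cntlt_succ (X : Finset (Fin N)) {j : ℕ} (h : j < N) :
    cntlt X (j+1) = cntlt X j + (if (⟨j, h⟩ : Fin N) ∈ X then 1 else 0) := by
  classical
  unfold cntlt
  rw [show (X.filter (fun x => x.val < j+1)) =
      (X.filter (fun x => x.val < j)) ∪ (X.filter (fun x => x.val = j)) by
    ext x
    simp only [Finset.mem_union, Finset.mem_filter, ← and_or_left]
    constructor <;> (rintro ⟨hx, h2⟩; exact ⟨hx, by omega⟩)]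
  rw [Finset.card_union_of_disjoint (by
    simp only [Finset.disjoint_left, Finset.mem_filter]; omega)]
  congr 1
  split_ifs with hm
  · rw [show X.filter (fun x => x.val = j) = {⟨j,h⟩} by
      ext x; simp only [Finset.mem_filter, Finset.mem_singleton, Fin.ext_iff]
      constructor
      · rintro ⟨_, hx⟩; exact hx
      · rintro rfl; exact ⟨hm, rfl⟩]
    simp
  · rw [Finset.card_eq_zero]
    ext x; simp only [Finset.mem_filter, Finset.notMem_empty, iff_false]
    rintro ⟨hx, hv⟩
    exact hm (by rwa [show (⟨j,h⟩ : Fin N) = x from (Fin.ext hv.symm)])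

lemma cntlt_of_ge (X : Finset (Fin N)) {j : ℕ} (h : N ≤ j) : cntlt X j = X.card := by
  unfold cntlt
  congr 1
  apply Finset.filter_true_of_mem
  intro x _; exact lt_of_lt_of_le x.isLt h

lemma cntlt_mono (X : Finset (Fin N)) {j k : ℕ} (h : j ≤ k) : cntlt X j ≤ cntlt X k := by
  apply Finset.card_le_card
  intro x hx
  simp only [Finset.mem_filter] at hx ⊢
  exact ⟨hx.1, by omega⟩

lemma cntlt_succ_le (X : Finset (Fin N)) (j : ℕ) : cntlt X (j+1) ≤ cntlt X j + 1 := by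
  rcases lt_or_ge j N with h | h
  · rw [cntlt_succ X h]; split_ifs <;> omega
  · rw [cntlt_of_ge X h, cntlt_of_ge X (by omega)]; omega

/-- swap the parts of the two sets lying at positions `≥ t` -/
def swapLt (t : ℕ) (q : Finset (Fin N) × Finset (Fin N)) : Finset (Fin N) × Finset (Fin N) :=
  (q.1.filter (fun x => x.val < t) ∪ q.2.filter (fun x => ¬ x.val < t),
   q.2.filter (fun x => x.val < t) ∪ q.1.filter (fun x => ¬ x.val < t))

lemma filter_disj (X Y : Finset (Fin N)) (t : ℕ) :
    Disjoint (X.filter (fun x => x.val < t)) (Y.filter (fun x => ¬ x.val < t)) := by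
  simp only [Finset.disjoint_left, Finset.mem_filter]
  rintro a ⟨_, h1⟩ ⟨_, h2⟩; exact h2 h1

lemma swapLt_card1 (t : ℕ) (q : Finset (Fin N) × Finset (Fin N)) :
    (swapLt t q).1.card + cntlt q.2 t = cntlt q.1 t + q.2.card := by
  have h1 := Finset.card_filter_add_card_filter_not (s := q.2)
    (p := fun x => x.val < t)
  rw [swapLt, Finset.card_union_of_disjoint (filter_disj _ _ _)]
  unfold cntlt
  omega

lemma swapLt_card2 (t : ℕ) (q : Finset (Fin N) × Finset (Fin N)) :
    (swapLt t q).2.card + cntlt q.1 t = cntlt q.2 t + q.1.card := by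
  have h1 := Finset.card_filter_add_card_filter_not (s := q.1)
    (p := fun x => x.val < t)
  rw [swapLt, Finset.card_union_of_disjoint (filter_disj _ _ _)]
  unfold cntlt
  omega

lemma swapLt_swapLt (t : ℕ) (q : Finset (Fin N) × Finset (Fin N)) :
    swapLt t (swapLt t q) = q := by
  unfold swapLt
  ext x <;> simp only [Finset.mem_union, Finset.mem_filter] <;>
    by_cases hx : x.val < t <;> simp [hx]

lemma cntlt_swapLt1 (t : ℕ) (q : Finset (Fin N) × Finset (Fin N)) {j : ℕ} (hj : j ≤ t) :
    cntlt (swapLt t q).1 j = cntlt q.1 j := by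
  unfold cntlt swapLt
  congr 1
  ext x
  simp only [Finset.mem_filter, Finset.mem_union]
  constructor
  · rintro ⟨h1 | h1, h2⟩
    · exact ⟨h1.1, h2⟩
    · exact absurd (by omega) h1.2
  · rintro ⟨h1, h2⟩
    exact ⟨Or.inl ⟨h1, by omega⟩, h2⟩

lemma cntlt_swapLt2 (t : ℕ) (q : Finset (Fin N) × Finset (Fin N)) {j : ℕ} (hj : j ≤ t) :
    cntlt (swapLt t q).2 j = cntlt q.2 j := by
  unfold cntlt swapLt
  congr 1
  ext x
  simp only [Finset.mem_filter, Finset.mem_union]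
  constructor
  · rintro ⟨h1 | h1, h2⟩
    · exact ⟨h1.1, h2⟩
    · exact absurd (by omega) h1.2
  · rintro ⟨h1, h2⟩
    exact ⟨Or.inl ⟨h1, by omega⟩, h2⟩

open Classical in
/-- reflection map: swap the two sets after the first position where
the second set's prefix count exceeds the first's -/
noncomputable def flipBad (q : Finset (Fin N) × Finset (Fin N)) :
    Finset (Fin N) × Finset (Fin N) :=
  if h : ∃ j, cntlt q.1 j < cntlt q.2 j then swapLt (Nat.find h) q else q

lemma find_spec_eq (q : Finset (Fin N) × Finset (Fin N))
    (h : ∃ j, cntlt q.1 j < cntlt q.2 j) :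
    cntlt q.2 (Nat.find h) = cntlt q.1 (Nat.find h) + 1 := by
  have hP := Nat.find_spec h
  have hpos : Nat.find h ≠ 0 := by
    intro h0
    rw [h0, cntlt_zero, cntlt_zero] at hP
    omega
  obtain ⟨s, hs⟩ : ∃ s, Nat.find h = s + 1 := ⟨Nat.find h - 1, by omega⟩
  have hprev : ¬ (cntlt q.1 s < cntlt q.2 s) := Nat.find_min h (by omega)
  have h1 := cntlt_succ_le q.2 s
  have h2 := cntlt_mono q.1 (show s ≤ s+1 by omega)
  rw [hs] at hP ⊢
  omega

lemma flipBad_eq (q : Finset (Fin N) × Finset (Fin N))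
    (h : ∃ j, cntlt q.1 j < cntlt q.2 j) : flipBad q = swapLt (Nat.find h) q := by
  rw [flipBad]
  rw [dif_pos h]

lemma flipBad_bad (q : Finset (Fin N) × Finset (Fin N))
    (h : ∃ j, cntlt q.1 j < cntlt q.2 j) :
    ∃ j, cntlt (flipBad q).1 j < cntlt (flipBad q).2 j := by
  refine ⟨Nat.find h, ?_⟩
  rw [flipBad_eq q h, cntlt_swapLt1 _ _ le_rfl, cntlt_swapLt2 _ _ le_rfl]
  exact Nat.find_spec h

lemma flipBad_find (q : Finset (Fin N) × Finset (Fin N))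
    (h : ∃ j, cntlt q.1 j < cntlt q.2 j) :
    Nat.find (flipBad_bad q h) = Nat.find h := by
  apply le_antisymm
  · apply Nat.find_le
    rw [flipBad_eq q h, cntlt_swapLt1 _ _ le_rfl, cntlt_swapLt2 _ _ le_rfl]
    exact Nat.find_spec h
  · apply Nat.le_find_iff _ _ |>.mpr
    intro m hm hc
    rw [flipBad_eq q h, cntlt_swapLt1 _ _ (le_of_lt hm), cntlt_swapLt2 _ _ (le_of_lt hm)] at hc
    exact Nat.find_min h hm hc

lemma flipBad_flipBad (q : Finset (Fin N) × Finset (Fin N))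
    (h : ∃ j, cntlt q.1 j < cntlt q.2 j) : flipBad (flipBad q) = q := by
  rw [flipBad_eq _ (flipBad_bad q h), flipBad_find q h, flipBad_eq q h, swapLt_swapLt]

lemma flipBad_card1 (q : Finset (Fin N) × Finset (Fin N))
    (h : ∃ j, cntlt q.1 j < cntlt q.2 j) :
    (flipBad q).1.card + 1 = q.2.card := by
  have := swapLt_card1 (Nat.find h) q
  have := find_spec_eq q h
  rw [flipBad_eq q h]
  omega

lemma flipBad_card2 (q : Finset (Fin N) × Finset (Fin N))
    (h : ∃ j, cntlt q.1 j < cntlt q.2 j) :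
    (flipBad q).2.card = q.1.card + 1 := by
  have := swapLt_card2 (Nat.find h) q
  have := find_spec_eq q h
  have hle : cntlt q.1 (Nat.find h) ≤ q.1.card := by
    unfold cntlt; exact Finset.card_filter_le _ _
  rw [flipBad_eq q h]
  omega

lemma bad_exists (q : Finset (Fin N) × Finset (Fin N)) (hlt : q.1.card < q.2.card) :
    ∃ j, cntlt q.1 j < cntlt q.2 j :=
  ⟨N, by rw [cntlt_of_ge _ le_rfl, cntlt_of_ge _ le_rfl]; exact hlt⟩

open Classical in
lemma card_bad (N m : ℕ) (hm : 1 ≤ m) :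
    ((Finset.univ : Finset (Finset (Fin N) × Finset (Fin N))).filter
      (fun q => (q.1.card = m ∧ q.2.card = m) ∧ ¬ ∀ j, cntlt q.2 j ≤ cntlt q.1 j)).card
    = ((Finset.univ : Finset (Finset (Fin N) × Finset (Fin N))).filter
      (fun q => q.1.card = m - 1 ∧ q.2.card = m + 1)).card := by
  have hbad : ∀ q : Finset (Fin N) × Finset (Fin N),
      (¬ ∀ j, cntlt q.2 j ≤ cntlt q.1 j) ↔ (∃ j, cntlt q.1 j < cntlt q.2 j) := by
    intro q; push_neg; rfl
  apply Finset.card_bij' (fun q _ => flipBad q) (fun q _ => flipBad q)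
  · intro q hq
    simp only [Finset.mem_filter, Finset.mem_univ, true_and] at hq ⊢
    obtain ⟨⟨hc1, hc2⟩, hb⟩ := hq
    rw [hbad] at hb
    have e1 := flipBad_card1 q hb
    have e2 := flipBad_card2 q hb
    omega
  · intro q hq
    simp only [Finset.mem_filter, Finset.mem_univ, true_and] at hq ⊢
    obtain ⟨hc1, hc2⟩ := hq
    have hb : ∃ j, cntlt q.1 j < cntlt q.2 j := bad_exists q (by omega)
    have e1 := flipBad_card1 q hb
    have e2 := flipBad_card2 q hb
    refine ⟨⟨by omega, by omega⟩, ?_⟩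
    rw [hbad]
    exact flipBad_bad q hb
  · intro q hq
    simp only [Finset.mem_filter, Finset.mem_univ, true_and] at hq
    rw [hbad] at hq
    exact flipBad_flipBad q hq.2
  · intro q hq
    simp only [Finset.mem_filter, Finset.mem_univ, true_and] at hq
    exact flipBad_flipBad q (bad_exists q (by omega))

lemma card_filter_card (N a : ℕ) :
    ((Finset.univ : Finset (Finset (Fin N))).filter (fun s => s.card = a)).card
      = N.choose a := by
  rw [show ((Finset.univ : Finset (Finset (Fin N))).filter (fun s => s.card = a))
      = Finset.powersetCard a Finset.univ by
    ext s
    simp [Finset.mem_powersetCard, Finset.subset_univ]]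
  rw [Finset.card_powersetCard, Finset.card_univ, Fintype.card_fin]

lemma card_pairs (N a b : ℕ) :
    ((Finset.univ : Finset (Finset (Fin N) × Finset (Fin N))).filter
      (fun q => q.1.card = a ∧ q.2.card = b)).card = N.choose a * N.choose b := by
  rw [← Finset.univ_product_univ,
    Finset.filter_product (fun s : Finset (Fin N) => s.card = a)
      (fun s : Finset (Fin N) => s.card = b),
    Finset.card_product, card_filter_card, card_filter_card]

open Classical in
lemma dom_card (N m : ℕ) (hm : 1 ≤ m) :
    ((Finset.univ : Finset (Finset (Fin N) × Finset (Fin N))).filter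
      (fun q => (q.1.card = m ∧ q.2.card = m) ∧ ∀ j, cntlt q.2 j ≤ cntlt q.1 j)).card
    + N.choose (m+1) * N.choose (m-1) = N.choose m * N.choose m := by
  have key := Finset.card_filter_add_card_filter_not
    (s := (Finset.univ : Finset (Finset (Fin N) × Finset (Fin N))).filter
      (fun q => q.1.card = m ∧ q.2.card = m))
    (p := fun q => ∀ j, cntlt q.2 j ≤ cntlt q.1 j)
  rw [Finset.filter_filter, Finset.filter_filter] at key
  rw [card_bad N m hm] at key
  rw [card_pairs, card_pairs] at key
  rw [Nat.mul_comm (N.choose (m+1))]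
  omega

/-! ### translating `IsBrk` to prefix counts -/

def Lset {n : ℕ} (p : (Fin n → Bool) × (Fin n → Bool)) : Finset (Fin n) :=
  Finset.univ.filter fun j => p.1 j = true

def Rset {n : ℕ} (p : (Fin n → Bool) × (Fin n → Bool)) : Finset (Fin n) :=
  Finset.univ.filter fun j => p.2 j = true

lemma leftsUpTo_eq {n : ℕ} (p : (Fin n → Bool) × (Fin n → Bool)) (i : Fin n) :
    leftsUpTo p i = cntlt (Lset p) (i.val + 1) := by
  unfold leftsUpTo cntlt Lset
  rw [Finset.filter_filter]
  congr 1
  ext j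
  simp only [Finset.mem_filter, Finset.mem_univ, true_and, Fin.le_def]
  constructor
  · rintro ⟨h1, h2⟩; exact ⟨h2, by omega⟩
  · rintro ⟨h1, h2⟩; exact ⟨by omega, h1⟩

lemma rightsUpTo_eq {n : ℕ} (p : (Fin n → Bool) × (Fin n → Bool)) (i : Fin n) :
    rightsUpTo p i = cntlt (Rset p) (i.val + 1) := by
  unfold rightsUpTo cntlt Rset
  rw [Finset.filter_filter]
  congr 1
  ext j
  simp only [Finset.mem_filter, Finset.mem_univ, true_and, Fin.le_def]
  constructor
  · rintro ⟨h1, h2⟩; exact ⟨h2, by omega⟩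
  · rintro ⟨h1, h2⟩; exact ⟨by omega, h1⟩

lemma rightsBelow_eq {n : ℕ} (p : (Fin n → Bool) × (Fin n → Bool)) (i : Fin n) :
    rightsBelow p i = cntlt (Rset p) i.val := by
  unfold rightsBelow cntlt Rset
  rw [Finset.filter_filter]
  congr 1
  ext j
  simp only [Finset.mem_filter, Finset.mem_univ, true_and, Fin.lt_def]
  tauto

/-- generic prefix-count comparison for a "shift by one" correspondence -/
lemma cnt_shift {n : ℕ} (hn : 1 ≤ n) (L : Finset (Fin n)) (X : Finset (Fin (n-1)))
    (h0 : (⟨0, by omega⟩ : Fin n) ∈ L)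
    (hcompat : ∀ (k : ℕ) (hk : k < n-1),
      ((⟨k+1, by omega⟩ : Fin n) ∈ L ↔ (⟨k, hk⟩ : Fin (n-1)) ∈ X)) :
    ∀ j : ℕ, cntlt L (j+1) = cntlt X j + 1 := by
  intro j
  induction j with
  | zero =>
    rw [cntlt_zero, cntlt_succ L (show 0 < n by omega), cntlt_zero, if_pos h0]
  | succ j ih =>
    rcases lt_or_ge j (n-1) with hj | hj
    · rw [cntlt_succ L (show j+1 < n by omega), cntlt_succ X hj, ih]
      have := hcompat j hj
      split_ifs with hL hX hX
      · omega
      · exact absurd (this.mp hL) hX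
      · exact absurd (this.mpr hX) hL
      · omega
    · rw [cntlt_of_ge L (show n ≤ j+1+1 by omega), cntlt_of_ge L (show n ≤ j+1 by omega)] at *
      rw [cntlt_of_ge X (show n-1 ≤ j+1 by omega), cntlt_of_ge X (show n-1 ≤ j by omega)] at *
      exact ih

/-- generic prefix-count comparison for an "identity" correspondence up to `n-1` -/
lemma cnt_same {n : ℕ} (R : Finset (Fin n)) (Y : Finset (Fin (n-1)))
    (hcompat : ∀ (k : ℕ) (hk : k < n-1),
      ((⟨k, by omega⟩ : Fin n) ∈ R ↔ (⟨k, hk⟩ : Fin (n-1)) ∈ Y)) :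
    ∀ j : ℕ, j ≤ n-1 → cntlt R j = cntlt Y j := by
  intro j
  induction j with
  | zero => intro _; rw [cntlt_zero, cntlt_zero]
  | succ j ih =>
    intro hj
    have hj' : j < n - 1 := by omega
    rw [cntlt_succ R (show j < n by omega), cntlt_succ Y hj', ih (by omega)]
    have := hcompat j hj'
    split_ifs with hL hX hX
    · omega
    · exact absurd (this.mp hL) hX
    · exact absurd (this.mpr hX) hL
    · omega

def toDom {n : ℕ} (p : (Fin n → Bool) × (Fin n → Bool)) :
    Finset (Fin (n-1)) × Finset (Fin (n-1)) :=
  (Finset.univ.filter fun k => p.1 ⟨k.val+1, by have := k.isLt; omega⟩ = true,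
   Finset.univ.filter fun k => p.2 ⟨k.val, by have := k.isLt; omega⟩ = true)

def toBrk {n : ℕ} (q : Finset (Fin (n-1)) × Finset (Fin (n-1))) :
    (Fin n → Bool) × (Fin n → Bool) :=
  (fun i => if h : i.val = 0 then true else
      decide ((⟨i.val - 1, by have := i.isLt; omega⟩ : Fin (n-1)) ∈ q.1),
   fun i => if h : i.val = n - 1 then true else
      decide ((⟨i.val, by have := i.isLt; omega⟩ : Fin (n-1)) ∈ q.2))

lemma isBrk_cond4' {n r : ℕ} {p : (Fin n → Bool) × (Fin n → Bool)} (hp : IsBrk n r p) :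
    ∀ j : ℕ, j < n → cntlt (Rset p) j < cntlt (Lset p) (j+1) := by
  intro j hj
  have h4 := hp.2.2.2 ⟨j, hj⟩
  rwa [rightsBelow_eq, leftsUpTo_eq] at h4

lemma isBrk_first {n r : ℕ} (hn : 1 ≤ n) {p : (Fin n → Bool) × (Fin n → Bool)}
    (hp : IsBrk n r p) : (⟨0, by omega⟩ : Fin n) ∈ Lset p := by
  have h4 := isBrk_cond4' hp 0 (by omega)
  rw [cntlt_zero, cntlt_succ _ (show 0 < n by omega), cntlt_zero] at h4
  by_contra hmem
  rw [if_neg hmem] at h4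
  omega

lemma isBrk_last {n r : ℕ} (hn : 1 ≤ n) {p : (Fin n → Bool) × (Fin n → Bool)}
    (hp : IsBrk n r p) : (⟨n-1, by omega⟩ : Fin n) ∈ Rset p := by
  have hL : cntlt (Lset p) ((n-1)+1) = r := by
    rw [cntlt_of_ge _ (by omega)]
    exact hp.1
  have hR : cntlt (Rset p) ((n-1)+1) = r := by
    rw [cntlt_of_ge _ (by omega)]
    exact hp.2.1
  have h4 := isBrk_cond4' hp (n-1) (by omega)
  rw [hL] at h4
  rw [cntlt_succ _ (show n-1 < n by omega)] at hR
  by_contra hmem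
  rw [if_neg hmem] at hR
  omega

lemma toDom_compatL {n : ℕ} (p : (Fin n → Bool) × (Fin n → Bool)) (k : ℕ) (hk : k < n-1) :
    ((⟨k+1, by omega⟩ : Fin n) ∈ Lset p ↔ (⟨k, hk⟩ : Fin (n-1)) ∈ (toDom p).1) := by
  simp [Lset, toDom]

lemma toDom_compatR {n : ℕ} (p : (Fin n → Bool) × (Fin n → Bool)) (k : ℕ) (hk : k < n-1) :
    ((⟨k, by omega⟩ : Fin n) ∈ Rset p ↔ (⟨k, hk⟩ : Fin (n-1)) ∈ (toDom p).2) := by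
  simp [Rset, toDom]

lemma toBrk_compatL {n : ℕ} (hn : 1 ≤ n) (q : Finset (Fin (n-1)) × Finset (Fin (n-1)))
    (k : ℕ) (hk : k < n-1) :
    ((⟨k+1, by omega⟩ : Fin n) ∈ Lset (toBrk q) ↔ (⟨k, hk⟩ : Fin (n-1)) ∈ q.1) := by
  simp only [Lset, Finset.mem_filter, Finset.mem_univ, true_and]
  simp only [toBrk]
  rw [dif_neg (by omega : ¬ (k+1) = 0)]
  simp

lemma toBrk_compatR {n : ℕ} (hn : 1 ≤ n) (q : Finset (Fin (n-1)) × Finset (Fin (n-1)))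
    (k : ℕ) (hk : k < n-1) :
    ((⟨k, by omega⟩ : Fin n) ∈ Rset (toBrk q) ↔ (⟨k, hk⟩ : Fin (n-1)) ∈ q.2) := by
  simp only [Rset, Finset.mem_filter, Finset.mem_univ, true_and]
  simp only [toBrk]
  rw [dif_neg (by omega : ¬ k = n-1)]
  simp

lemma toBrk_first {n : ℕ} (hn : 1 ≤ n) (q : Finset (Fin (n-1)) × Finset (Fin (n-1))) :
    (⟨0, by omega⟩ : Fin n) ∈ Lset (toBrk q) := by
  simp [Lset, toBrk]

lemma toBrk_last {n : ℕ} (hn : 1 ≤ n) (q : Finset (Fin (n-1)) × Finset (Fin (n-1))) :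
    (⟨n-1, by omega⟩ : Fin n) ∈ Rset (toBrk q) := by
  simp [Rset, toBrk]

open Classical in
lemma brk_card_eq_dom (n r : ℕ) (h1 : 1 ≤ r) (h2 : r ≤ n) :
    ((Finset.univ : Finset ((Fin n → Bool) × (Fin n → Bool))).filter
      (fun p => IsBrk n r p)).card
    = ((Finset.univ : Finset (Finset (Fin (n-1)) × Finset (Fin (n-1)))).filter
        (fun q => (q.1.card = r-1 ∧ q.2.card = r-1) ∧
          ∀ j, cntlt q.2 j ≤ cntlt q.1 j)).card := by
  have hn : 1 ≤ n := le_trans h1 h2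
  apply Finset.card_bij' (fun p _ => toDom p) (fun q _ => toBrk q)
  · -- forward membership
    intro p hp
    simp only [Finset.mem_filter, Finset.mem_univ, true_and] at hp ⊢
    have hshift := cnt_shift hn (Lset p) (toDom p).1 (isBrk_first hn hp)
      (fun k hk => toDom_compatL p k hk)
    have hsame := cnt_same (Rset p) (toDom p).2 (fun k hk => toDom_compatR p k hk)
    have hLcard : (Lset p).card = r := hp.1
    have hRcard : (Rset p).card = r := hp.2.1
    have hX : (toDom p).1.card = r - 1 := by
      have e := hshift (n-1)
      rw [cntlt_of_ge _ (by omega : n ≤ (n-1)+1), cntlt_of_ge _ (le_refl (n-1))] at e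
      omega
    have hY : (toDom p).2.card = r - 1 := by
      have e := hsame (n-1) le_rfl
      rw [cntlt_of_ge _ (le_refl (n-1))] at e
      have e2 : cntlt (Rset p) ((n-1)+1) = r := by
        rw [cntlt_of_ge _ (by omega)]; exact hRcard
      rw [cntlt_succ _ (show n-1 < n by omega), if_pos (isBrk_last hn hp)] at e2
      omega
    refine ⟨⟨hX, hY⟩, ?_⟩
    intro j
    rcases le_or_gt j (n-1) with hj | hj
    · have e1 := hsame j hj
      have e2 := hshift j
      have e3 := isBrk_cond4' hp j (by omega)
      omega
    · rw [cntlt_of_ge _ (by omega : n-1 ≤ j), cntlt_of_ge _ (by omega : n-1 ≤ j)]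
      omega
  · -- backward membership
    intro q hq
    simp only [Finset.mem_filter, Finset.mem_univ, true_and] at hq ⊢
    obtain ⟨⟨hX, hY⟩, hdom⟩ := hq
    have hshift := cnt_shift hn (Lset (toBrk q)) q.1 (toBrk_first hn q)
      (fun k hk => toBrk_compatL hn q k hk)
    have hsame := cnt_same (Rset (toBrk q)) q.2 (fun k hk => toBrk_compatR hn q k hk)
    have hLcard : (Lset (toBrk q)).card = r := by
      have e := hshift (n-1)
      rw [cntlt_of_ge _ (by omega : n ≤ (n-1)+1), cntlt_of_ge _ (le_refl (n-1))] at e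
      omega
    have hRcard : (Rset (toBrk q)).card = r := by
      have e := hsame (n-1) le_rfl
      rw [cntlt_of_ge _ (le_refl (n-1))] at e
      have e2 : cntlt (Rset (toBrk q)) ((n-1)+1) = (Rset (toBrk q)).card := by
        rw [cntlt_of_ge _ (by omega)]
      rw [cntlt_succ _ (show n-1 < n by omega), if_pos (toBrk_last hn q)] at e2
      omega
    have hcond4 : ∀ i : Fin n, rightsBelow (toBrk q) i < leftsUpTo (toBrk q) i := by
      intro i
      rw [rightsBelow_eq, leftsUpTo_eq]
      have e1 := hsame i.val (by have := i.isLt; omega)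
      have e2 := hshift i.val
      have e3 := hdom i.val
      omega
    refine ⟨hLcard, hRcard, ?_, hcond4⟩
    intro i
    rw [rightsUpTo_eq, leftsUpTo_eq]
    have e1 := hcond4 i
    rw [rightsBelow_eq, leftsUpTo_eq] at e1
    have e2 := cntlt_succ_le (Rset (toBrk q)) i.val
    omega
  · -- left inverse
    intro p hp
    simp only [Finset.mem_filter, Finset.mem_univ, true_and] at hp
    have hfirst := isBrk_first hn hp
    have hlast := isBrk_last hn hp
    simp only [Lset, Finset.mem_filter, Finset.mem_univ, true_and] at hfirst
    simp only [Rset, Finset.mem_filter, Finset.mem_univ, true_and] at hlast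
    apply Prod.ext
    · funext i
      show (toBrk (toDom p)).1 i = p.1 i
      simp only [toBrk]
      by_cases h : i.val = 0
      · rw [dif_pos h]
        have : i = ⟨0, by omega⟩ := Fin.ext h
        rw [this]
        exact hfirst.symm
      · rw [dif_neg h]
        have hmem : ((⟨i.val - 1, by have := i.isLt; omega⟩ : Fin (n-1)) ∈ (toDom p).1)
            ↔ p.1 i = true := by
          simp only [toDom, Finset.mem_filter, Finset.mem_univ, true_and]
          constructor
          · intro hh
            rwa [show (⟨i.val - 1 + 1, by have := i.isLt; omega⟩ : Fin n) = i from
              Fin.ext (by have := i.isLt; simp; omega)] at hh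
          · intro hh
            rw [show (⟨i.val - 1 + 1, by have := i.isLt; omega⟩ : Fin n) = i from
              Fin.ext (by have := i.isLt; simp; omega)]
            exact hh
        rcases Bool.eq_false_or_eq_true (p.1 i) with hb | hb <;> simp [hb, hmem]
    · funext i
      show (toBrk (toDom p)).2 i = p.2 i
      simp only [toBrk]
      by_cases h : i.val = n - 1
      · rw [dif_pos h]
        have : i = ⟨n-1, by omega⟩ := Fin.ext h
        rw [this]
        exact hlast.symm
      · rw [dif_neg h]
        have hmem : ((⟨i.val, by have := i.isLt; omega⟩ : Fin (n-1)) ∈ (toDom p).2)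
            ↔ p.2 i = true := by
          simp [toDom]
        rcases Bool.eq_false_or_eq_true (p.2 i) with hb | hb <;> simp [hb, hmem]
  · -- right inverse
    intro q hq
    apply Prod.ext
    · ext k
      have := toBrk_compatL hn q k.val k.isLt
      have hk : (⟨k.val, k.isLt⟩ : Fin (n-1)) = k := Fin.ext rfl
      rw [hk] at this
      rw [← this]
      simp only [toDom, Lset, Finset.mem_filter, Finset.mem_univ, true_and]
    · ext k
      have := toBrk_compatR hn q k.val k.isLt
      have hk : (⟨k.val, k.isLt⟩ : Fin (n-1)) = k := Fin.ext rfl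
      rw [hk] at this
      rw [← this]
      simp only [toDom, Rset, Finset.mem_filter, Finset.mem_univ, true_and]

open Classical in
lemma dom_card_zero (N : ℕ) :
    ((Finset.univ : Finset (Finset (Fin N) × Finset (Fin N))).filter
      (fun q => (q.1.card = 0 ∧ q.2.card = 0) ∧ ∀ j, cntlt q.2 j ≤ cntlt q.1 j)).card = 1 := by
  rw [show ((Finset.univ : Finset (Finset (Fin N) × Finset (Fin N))).filter
      (fun q => (q.1.card = 0 ∧ q.2.card = 0) ∧ ∀ j, cntlt q.2 j ≤ cntlt q.1 j))
      = {((∅ : Finset (Fin N)), (∅ : Finset (Fin N)))} from ?_]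
  · rw [Finset.card_singleton]
  · ext q
    simp only [Finset.mem_filter, Finset.mem_univ, true_and, Finset.mem_singleton,
      Finset.card_eq_zero]
    constructor
    · rintro ⟨⟨hh1, hh2⟩, _⟩
      exact Prod.ext hh1 hh2
    · rintro rfl
      refine ⟨⟨rfl, rfl⟩, fun j => le_rfl⟩

lemma narayana_arith (n r : ℕ) (h1 : 2 ≤ r) (h2 : r ≤ n) :
    n * ((n-1).choose (r-1) * (n-1).choose (r-1)) =
      n.choose r * n.choose (r-1) + n * ((n-1).choose r * (n-1).choose (r-2)) := by
  obtain ⟨t, rfl⟩ : ∃ t, r = t + 1 := ⟨r - 1, by omega⟩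
  obtain ⟨s, hn⟩ : ∃ s, n = (t + 1) + s := ⟨n - (t+1), by omega⟩
  have ht : 1 ≤ t := by omega
  have A1 : n * (n-1).choose t = n.choose (t+1) * (t+1) := by
    have := Nat.add_one_mul_choose_eq (n-1) t
    rwa [show n - 1 + 1 = n by omega] at this
  have A2 : n * (n-1).choose (t-1) = n.choose t * t := by
    have := Nat.add_one_mul_choose_eq (n-1) (t-1)
    rwa [show n - 1 + 1 = n by omega,
      show t - 1 + 1 = t by omega] at this
  have A3 : (n-1).choose (t+1) * (t+1) = (n-1).choose t * s := by
    have := Nat.choose_succ_right_eq (n-1) t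
    rwa [show n - 1 - t = s by omega] at this
  have A4 : n.choose (t+1) * (t+1) = n.choose t * (s+1) := by
    have := Nat.choose_succ_right_eq n t
    rwa [show n - t = s + 1 by omega] at this
  set a := n.choose (t+1) with ha
  set b := n.choose t with hb
  set c := (n-1).choose t with hc
  set d := (n-1).choose (t+1) with hd
  set e := (n-1).choose (t-1) with he
  rw [show t + 1 - 1 = t from rfl, show t + 1 - 2 = t - 1 by omega]
  -- goal : n * (c * c) = a * b + n * (d * e)
  apply Nat.eq_of_mul_eq_mul_left (show 0 < t + 1 by omega)
  have hnc : c * n = b * (s+1) := by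
    rw [Nat.mul_comm c n, show n * c = a * (t+1) from A1, A4]
  calc (t+1) * (n * (c * c)) = c * ((t+1) * (c * n)) := by ring
    _ = c * ((t+1) * (b * (s+1))) := by rw [hnc]
    _ = b * (c * n) + (c * s) * (b * t) := by rw [hn]; ring
    _ = b * (b * (s+1)) + (d * (t+1)) * (n * e) := by rw [hnc, ← A3, ← A2]
    _ = b * (a * (t+1)) + (d * (t+1)) * (n * e) := by rw [← A4]
    _ = (t+1) * (a * b + n * (d * e)) := by ring

/-- The number of non-crossing sequences of type `(n,r)` is the Narayana number
`N(n,r) = (1/n) * C(n,r) * C(n,r-1)`. -/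
theorem brk_card_eq_narayana (n r : ℕ) (h1 : 1 ≤ r) (h2 : r ≤ n) :
    n * Nat.card {p : (Fin n → Bool) × (Fin n → Bool) // IsBrk n r p} =
      n.choose r * n.choose (r - 1) := by
  classical
  have hcard : Nat.card {p : (Fin n → Bool) × (Fin n → Bool) // IsBrk n r p}
      = ((Finset.univ : Finset ((Fin n → Bool) × (Fin n → Bool))).filter
          (fun p => IsBrk n r p)).card := by
    rw [Nat.card_eq_fintype_card, Fintype.card_subtype]
  rw [hcard, brk_card_eq_dom n r h1 h2]
  rcases eq_or_lt_of_le h1 with hr1 | hr2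
  · -- r = 1
    rw [← hr1, show (1:ℕ)-1 = 0 from rfl, dom_card_zero (n-1), Nat.choose_one_right,
      Nat.choose_zero_right, mul_one]
  · -- 2 ≤ r
    have e := dom_card (n-1) (r-1) (by omega)
    rw [show r-1+1 = r by omega, show r-1-1 = r-2 by omega] at e
    have e2 : n * (((Finset.univ : Finset (Finset (Fin (n-1)) × Finset (Fin (n-1)))).filter
        (fun q => (q.1.card = r-1 ∧ q.2.card = r-1) ∧
          ∀ j, cntlt q.2 j ≤ cntlt q.1 j)).card
        + (n-1).choose r * (n-1).choose (r-2))
        = n * ((n-1).choose (r-1) * (n-1).choose (r-1)) := by rw [e]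
    rw [Nat.mul_add, narayana_arith n r hr2 h2] at e2
    exact Nat.add_right_cancel e2
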